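/- arXiv:1204.1608 — 3 statements merged into one kernel-verified Lean document; each statement's English description precedes it below -/
import Mathlib

section
/- With notation as in the Diophantine setup (α ∈ ℝⁿ∖{0}, |α| = |α₀|, F the smallest rational subspace of ℝⁿ containing α), for any Q, K > 0 and any point y in the polar convex body 𝒞(Q,K)* of 𝒞(Q,K) = {x ∈ F : |x| ≤ K, |x₀α − α₀x| ≤ Q⁻¹}, one has |y·α| ≤ |α|·K⁻¹; moreover, if additionally 2|α|QK ≥ 1, then |y| ≤ 2|α|Q. Hence 𝒞(Q,K)* ⊆ 𝒞'(2|α|Q, |α|⁻¹K), where 𝒞'(Q',K') = {x ∈ F : |x| ≤ Q', |x·α| ≤ K'⁻¹}. -/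
open Pointwise

/-- Dot product on `Fin n → ℝ` (the norm on `Fin n → ℝ` is the sup norm `|x| = max |x_i|`). -/
noncomputable def dotR {n : ℕ} (x y : Fin n → ℝ) : ℝ := ∑ i, x i * y i

/-- The convex body 𝒞(Q,K) = {x ∈ F : |x| ≤ K, |x₀α − α₀x| ≤ Q⁻¹}. -/
def bodyC {n : ℕ} [NeZero n] (F : Submodule ℝ (Fin n → ℝ)) (α : Fin n → ℝ) (Q K : ℝ) :
    Set (Fin n → ℝ) :=
  {x | x ∈ F ∧ ‖x‖ ≤ K ∧ ‖x 0 • α - α 0 • x‖ ≤ Q⁻¹}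

/-- The dual convex body 𝒞'(Q,K) = {x ∈ F : |x| ≤ Q, |x·α| ≤ K⁻¹}. -/
def bodyC' {n : ℕ} (F : Submodule ℝ (Fin n → ℝ)) (α : Fin n → ℝ) (Q K : ℝ) :
    Set (Fin n → ℝ) :=
  {x | x ∈ F ∧ ‖x‖ ≤ Q ∧ |dotR x α| ≤ K⁻¹}

/-- The polar convex body within F: 𝒞* = {y ∈ F : x·y ≤ 1 for all x ∈ 𝒞}. -/
def polarIn {n : ℕ} (F : Submodule ℝ (Fin n → ℝ)) (C : Set (Fin n → ℝ)) :
    Set (Fin n → ℝ) :=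
  {y | y ∈ F ∧ ∀ x ∈ C, dotR x y ≤ 1}

lemma dotR_comm {n : ℕ} (x y : Fin n → ℝ) : dotR x y = dotR y x := by
  unfold dotR; simp [mul_comm]

lemma dotR_smul {n : ℕ} (c : ℝ) (x y : Fin n → ℝ) : dotR (c • x) y = c * dotR x y := by
  unfold dotR; rw [Finset.mul_sum]; exact Finset.sum_congr rfl fun i _ => by simp [mul_assoc]

lemma sq_norm_le_dotR {n : ℕ} [NeZero n] (y : Fin n → ℝ) : ‖y‖ ^ 2 ≤ dotR y y := by
  obtain ⟨i, hi⟩ := Finite.exists_max (fun i => |y i|)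
  have h1 : ‖y‖ ≤ |y i| := (pi_norm_le_iff_of_nonneg (abs_nonneg _)).mpr fun j => by
    simpa [Real.norm_eq_abs] using hi j
  calc ‖y‖ ^ 2 ≤ |y i| ^ 2 := pow_le_pow_left₀ (norm_nonneg y) h1 2
    _ = y i * y i := by rw [sq_abs]; ring
    _ ≤ dotR y y := Finset.single_le_sum (fun j _ => mul_self_nonneg (y j)) (Finset.mem_univ i)

/-- any y in the polar body 𝒞(Q,K)* satisfies |y·α| ≤ |α|K⁻¹; if moreover
2|α|QK ≥ 1 then |y| ≤ 2|α|Q. Hence 𝒞(Q,K)* ⊆ 𝒞'(2|α|Q, |α|⁻¹K). -/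
theorem stmt_7 (n : ℕ) [NeZero n] (hn : 2 ≤ n)
    (α : Fin n → ℝ) (hα : α ≠ 0) (hα0 : ‖α‖ = |α 0|)
    (F : Submodule ℝ (Fin n → ℝ)) (hαF : α ∈ F)
    (hFrat : ∃ S : Set (Fin n → ℝ), (∀ v ∈ S, ∀ i, ∃ r : ℚ, v i = (r : ℝ)) ∧
      F = Submodule.span ℝ S)
    (Q K : ℝ) (hQ : 0 < Q) (hK : 0 < K) :
    (∀ y ∈ polarIn F (bodyC F α Q K), |dotR y α| ≤ ‖α‖ * K⁻¹) ∧
    (1 ≤ 2 * ‖α‖ * Q * K →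
      (∀ y ∈ polarIn F (bodyC F α Q K), ‖y‖ ≤ 2 * ‖α‖ * Q) ∧
      polarIn F (bodyC F α Q K) ⊆ bodyC' F α (2 * ‖α‖ * Q) (‖α‖⁻¹ * K)) := by
  have ha : (0:ℝ) < ‖α‖ := norm_pos_iff.mpr hα
  -- Part 1
  have part1 : ∀ y ∈ polarIn F (bodyC F α Q K), |dotR y α| ≤ ‖α‖ * K⁻¹ := by
    rintro y ⟨hyF, hpol⟩
    have hmem : ∀ c : ℝ, |c| = K * ‖α‖⁻¹ → (c • α) ∈ bodyC F α Q K := by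
      intro c hc
      refine ⟨F.smul_mem c hαF, ?_, ?_⟩
      · rw [norm_smul, Real.norm_eq_abs, hc]
        rw [mul_assoc, inv_mul_cancel₀ ha.ne', mul_one]
      · have : (c • α) 0 • α - α 0 • (c • α) = 0 := by
          simp [smul_smul, mul_comm]
        rw [this, norm_zero]
        positivity
    have h1 := hpol _ (hmem (K * ‖α‖⁻¹) (by rw [abs_of_pos (by positivity)]))
    have h2 := hpol _ (hmem (-(K * ‖α‖⁻¹)) (by rw [abs_neg, abs_of_pos (by positivity)]))
    rw [dotR_smul] at h1 h2
    rw [dotR_comm, abs_le]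
    have hpos : (0:ℝ) < K * ‖α‖⁻¹ := by positivity
    have heq : (1:ℝ) / (K * ‖α‖⁻¹) = ‖α‖ * K⁻¹ := by
      field_simp
    constructor
    · have h2' : K * ‖α‖⁻¹ * (-(dotR α y)) ≤ 1 := by linarith
      have := (le_div_iff₀' hpos).mpr h2'
      rw [heq] at this; linarith
    · have := (le_div_iff₀' hpos).mpr h1
      rwa [heq] at this
  refine ⟨part1, fun hQK => ?_⟩
  have part2 : ∀ y ∈ polarIn F (bodyC F α Q K), ‖y‖ ≤ 2 * ‖α‖ * Q := by
    rintro y ⟨hyF, hpol⟩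
    rcases eq_or_ne y 0 with rfl | hy
    · simp; positivity
    · have hny : (0:ℝ) < ‖y‖ := norm_pos_iff.mpr hy
      set c : ℝ := (2 * Q * ‖y‖ * ‖α‖)⁻¹ with hc
      have hcpos : 0 < c := by positivity
      have hxmem : c • y ∈ bodyC F α Q K := by
        refine ⟨F.smul_mem c hyF, ?_, ?_⟩
        · rw [norm_smul, Real.norm_eq_abs, abs_of_pos hcpos, hc]
          rw [show (2 * Q * ‖y‖ * ‖α‖)⁻¹ * ‖y‖ = (2 * Q * ‖α‖)⁻¹ by
            field_simp]
          rw [inv_le_iff_one_le_mul₀ (by positivity)]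
          nlinarith
        · have hb : ‖(c • y) 0 • α - α 0 • (c • y)‖ ≤ 2 * ‖α‖ * ‖c • y‖ := by
            refine (norm_sub_le _ _).trans ?_
            rw [norm_smul, norm_smul, Real.norm_eq_abs, Real.norm_eq_abs, ← hα0]
            have h0 : |(c • y) 0| ≤ ‖c • y‖ := by
              simpa [Real.norm_eq_abs, abs_mul] using norm_le_pi_norm (c • y) 0
            nlinarith [norm_nonneg (c • y), norm_nonneg α]
          refine hb.trans ?_
          rw [norm_smul, Real.norm_eq_abs, abs_of_pos hcpos, hc]
          rw [show 2 * ‖α‖ * ((2 * Q * ‖y‖ * ‖α‖)⁻¹ * ‖y‖) = Q⁻¹ by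
            field_simp [ha.ne', hny.ne', hQ.ne']]
      have hd := hpol _ hxmem
      rw [dotR_smul] at hd
      have hdy : dotR y y ≤ 2 * Q * ‖y‖ * ‖α‖ := by
        rw [hc] at hd
        calc dotR y y = (2 * Q * ‖y‖ * ‖α‖) * ((2 * Q * ‖y‖ * ‖α‖)⁻¹ * dotR y y) := by
              field_simp
          _ ≤ (2 * Q * ‖y‖ * ‖α‖) * 1 := by
              apply mul_le_mul_of_nonneg_left hd (by positivity)
          _ = 2 * Q * ‖y‖ * ‖α‖ := mul_one _
      have hsq := sq_norm_le_dotR y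
      nlinarith
  refine ⟨part2, ?_⟩
  rintro y hy
  refine ⟨hy.1, part2 y hy, ?_⟩
  have := part1 y hy
  rw [show (‖α‖⁻¹ * K)⁻¹ = ‖α‖ * K⁻¹ by rw [mul_inv, inv_inv]]
  exact this
end

section
/- Given α ∈ ℝⁿ∖{0} with number of effective frequencies d, for any Q > max(1, d|α|⁻¹), there exist d periodic vectors ω₁,…,ω_d with periods T₁,…,T_d such that T₁ω₁,…,T_dω_d form a ℤ-basis of ℤⁿ ∩ F, and for each j: |α − ω_j| ≤ d(|α| T_j Q)⁻¹ and |α|⁻¹ ≤ T_j ≤ |α|⁻¹ d Ψ_d(Q). -/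
/-- A rational subspace of ℝⁿ: one spanned by vectors with rational coordinates. -/
def IsRationalSubspace {n : ℕ} (G : Submodule ℝ (Fin n → ℝ)) : Prop :=
  ∃ S : Set (Fin n → ℝ), (∀ v ∈ S, ∀ i, ∃ r : ℚ, v i = (r : ℝ)) ∧ G = Submodule.span ℝ S


lemma intvec_finite (n : ℕ) (R : ℝ) :
    {z : Fin n → ℝ | (∀ i, ∃ m : ℤ, z i = (m : ℝ)) ∧ ‖z‖ ≤ R}.Finite := by
  have h : {z : Fin n → ℝ | (∀ i, ∃ m : ℤ, z i = (m : ℝ)) ∧ ‖z‖ ≤ R} ⊆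
      (fun m : Fin n → ℤ => fun i => (m i : ℝ)) ''
        (Set.univ.pi fun _ => Set.Icc (-⌈R⌉) ⌈R⌉) := by
    rintro z ⟨hz, hzn⟩
    choose m hm using hz
    refine ⟨m, fun i _ => ?_, by funext i; exact (hm i).symm⟩
    have h1 : |z i| ≤ R := le_trans (norm_le_pi_norm z i) hzn
    rw [hm i] at h1
    have h2 : (|m i| : ℝ) ≤ (⌈R⌉ : ℝ) := by
      push_cast
      exact le_trans h1 (Int.le_ceil R)
    have h3 : |m i| ≤ ⌈R⌉ := by exact_mod_cast h2
    exact Set.mem_Icc.2 (abs_le.1 h3)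
  exact ((Set.Finite.pi fun i => Set.finite_Icc _ _).image _).subset h

lemma bounded_basis {n d : ℕ} (Λ : Submodule ℤ (Fin n → ℝ))
    (hint : ∀ z ∈ Λ, ∀ i, ∃ m : ℤ, z i = (m : ℝ))
    (x : Fin d → (Fin n → ℝ)) (hxli : LinearIndependent ℝ x) (hxΛ : ∀ i, x i ∈ Λ)
    (hspan : ∀ z : Fin n → ℝ, z ∈ Λ → z ∈ Submodule.span ℝ (Set.range x)) :
    ∃ y : Fin d → (Fin n → ℝ), (∀ j, y j ∈ Λ) ∧ LinearIndependent ℝ y ∧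
      Submodule.span ℤ (Set.range y) = Λ ∧
      ∀ j, ∃ c : Fin d → ℝ, (∀ i, |c i| ≤ 1) ∧ y j = ∑ i, c i • x i := by
  set F' := Submodule.span ℝ (Set.range x) with hF'
  let b : Module.Basis (Fin d) ℝ F' := Module.Basis.span hxli
  have hb : ∀ i, ((b i : Fin n → ℝ)) = x i := fun i => by rw [Module.Basis.span_apply hxli i]
  -- coe of an F' element as sum of x's
  have hcoe : ∀ z : F', (z : Fin n → ℝ) = ∑ i, b.repr z i • x i := by
    intro z
    conv_lhs => rw [← b.sum_repr z]
    rw [Submodule.coe_sum]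
    exact Finset.sum_congr rfl fun i _ => by rw [SetLike.val_smul, hb i]
  -- main induction
  have main : ∀ k : ℕ, k ≤ d → ∃ w : Fin d → F',
      (∀ j : Fin d, (j : ℕ) < k → (((w j : Fin n → ℝ)) ∈ Λ ∧
        (∀ i, |b.repr (w j) i| ≤ 1) ∧
        (∀ i : Fin d, (j : ℕ) < (i : ℕ) → b.repr (w j) i = 0) ∧
        0 < b.repr (w j) j)) ∧
      (∀ z : F', ((z : Fin n → ℝ) ∈ Λ) →
        (∀ i : Fin d, k ≤ (i : ℕ) → b.repr z i = 0) →
        z ∈ Submodule.span ℤ (w '' {j : Fin d | (j : ℕ) < k})) := by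
    intro k
    induction k with
    | zero =>
      intro _
      refine ⟨fun _ => 0, fun j hj => absurd hj (Nat.not_lt_zero _), ?_⟩
      intro z hzΛ hzr
      have : b.repr z = 0 := Finsupp.ext fun i => hzr i (Nat.zero_le _)
      have hz0 : z = 0 := by
        have := congrArg b.repr.symm this
        simpa using this
      rw [hz0]; exact Submodule.zero_mem _
    | succ k ih =>
      intro hk1
      have hk : k < d := hk1
      obtain ⟨w, hw1, hw2⟩ := ih (le_of_lt hk)
      set κ : Fin d := ⟨k, hk⟩ with hκ
      -- the finite set A
      set A : Set F' := {z : F' | ((z : Fin n → ℝ) ∈ Λ) ∧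
        (∀ i : Fin d, (k : ℕ) < (i : ℕ) → b.repr z i = 0) ∧
        (∀ i : Fin d, (i : ℕ) < k → |b.repr z i| ≤ 1) ∧
        0 < b.repr z κ ∧ b.repr z κ ≤ 1} with hA
      have hbκA : b κ ∈ A := by
        refine ⟨by rw [hb κ]; exact hxΛ κ, ?_, ?_, ?_, ?_⟩
        · intro i hi
          rw [b.repr_self, Finsupp.single_apply, if_neg]
          intro h; subst h; exact lt_irrefl k hi
        · intro i hi
          rw [b.repr_self, Finsupp.single_apply, if_neg]
          · simp
          · intro h; subst h; exact lt_irrefl k hi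
        · rw [b.repr_self, Finsupp.single_apply, if_pos rfl]; norm_num
        · rw [b.repr_self, Finsupp.single_apply, if_pos rfl]
      -- all elements of A have all |repr| ≤ 1
      have hAbd : ∀ z ∈ A, ∀ i, |b.repr z i| ≤ 1 := by
        rintro z ⟨-, hsup, hlow, hκ1, hκ2⟩ i
        rcases lt_trichotomy ((i : ℕ)) k with h | h | h
        · exact hlow i h
        · have : i = κ := Fin.ext h
          rw [this]; rw [abs_le]; constructor <;> [linarith; exact hκ2]
        · rw [hsup i h]; simp
      have hAfin : A.Finite := by
        have hsub : A ⊆ Subtype.val ⁻¹'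
            {z : Fin n → ℝ | (∀ i, ∃ m : ℤ, z i = (m : ℝ)) ∧ ‖z‖ ≤ ∑ i, ‖x i‖} := by
          intro z hzA
          refine ⟨hint _ hzA.1, ?_⟩
          rw [hcoe z]
          refine le_trans (norm_sum_le _ _) (Finset.sum_le_sum fun i _ => ?_)
          rw [norm_smul]
          calc ‖b.repr z i‖ * ‖x i‖ ≤ 1 * ‖x i‖ := by
                apply mul_le_mul_of_nonneg_right _ (norm_nonneg _)
                rw [Real.norm_eq_abs]; exact hAbd z hzA i
            _ = ‖x i‖ := one_mul _
        exact ((intvec_finite n _).preimage (Subtype.val_injective.injOn)).subset hsub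
      -- minimal element
      have hane : hAfin.toFinset.Nonempty := ⟨b κ, hAfin.mem_toFinset.2 hbκA⟩
      obtain ⟨u, huA', hmin'⟩ := Finset.exists_min_image hAfin.toFinset
        (fun z => b.repr z κ) hane
      have huA : u ∈ A := hAfin.mem_toFinset.1 huA'
      have hmin : ∀ z ∈ A, b.repr u κ ≤ b.repr z κ := fun z hz =>
        hmin' z (hAfin.mem_toFinset.2 hz)
      set t₀ : ℝ := b.repr u κ with ht₀
      have ht₀pos : 0 < t₀ := huA.2.2.2.1
      have ht₀le1 : t₀ ≤ 1 := huA.2.2.2.2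
      refine ⟨Function.update w κ u, ?_, ?_⟩
      · intro j hj
        rcases Nat.lt_succ_iff_lt_or_eq.1 hj with hj' | hj'
        · have hjκ : j ≠ κ := by
            intro h; rw [h] at hj'; exact lt_irrefl _ hj'
          rw [Function.update_of_ne hjκ]
          exact hw1 j hj'
        · have hjκ : j = κ := Fin.ext hj'
          rw [hjκ, Function.update_self]
          exact ⟨huA.1, hAbd u huA, fun i hi => huA.2.1 i hi, ht₀pos⟩
      · intro z hzΛ hzr
        set s : ℝ := b.repr z κ with hsdef
        set q : ℤ := ⌊s / t₀⌋ with hq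
        set z₁ : F' := z - q • u with hz₁
        have hrepr₁ : ∀ i, b.repr z₁ i = b.repr z i - (q : ℝ) * b.repr u i := by
          intro i
          rw [hz₁, map_sub, map_zsmul, Finsupp.sub_apply, Finsupp.smul_apply]
          simp
        have hz₁κ : b.repr z₁ κ = s - (q : ℝ) * t₀ := by rw [hrepr₁]
        have hfr : s - (q : ℝ) * t₀ = t₀ * Int.fract (s / t₀) := by
          rw [Int.fract, hq]
          field_simp
        have hr0 : 0 ≤ s - (q : ℝ) * t₀ := by
          rw [hfr]; exact mul_nonneg ht₀pos.le (Int.fract_nonneg _)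
        have hrlt : s - (q : ℝ) * t₀ < t₀ := by
          rw [hfr]
          calc t₀ * Int.fract (s / t₀) < t₀ * 1 :=
                mul_lt_mul_of_pos_left (Int.fract_lt_one _) ht₀pos
            _ = t₀ := mul_one _
        have hz₁Λ : (z₁ : Fin n → ℝ) ∈ Λ := by
          have hc : (z₁ : Fin n → ℝ) = (z : Fin n → ℝ) - q • (u : Fin n → ℝ) := by
            rw [hz₁]; push_cast; ring
          rw [hc]
          exact Λ.sub_mem hzΛ (Λ.smul_mem q huA.1)
        have hz₁r : ∀ i : Fin d, k < (i : ℕ) → b.repr z₁ i = 0 := by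
          intro i hi
          rw [hrepr₁, hzr i hi, huA.2.1 i hi]
          ring
        have hκ0 : b.repr z₁ κ = 0 := by
          by_contra h0
          have hrpos : 0 < s - (q : ℝ) * t₀ := by
            rcases lt_or_eq_of_le hr0 with h | h
            · exact h
            · exact absurd (hz₁κ.trans h.symm) h0
          set z₂ : F' := z₁ - ∑ i ∈ Finset.univ.filter (fun i : Fin d => (i : ℕ) < k),
            ⌊b.repr z₁ i⌋ • b i with hz₂
          have hrepr₂ : ∀ i' : Fin d, b.repr z₂ i' = b.repr z₁ i' -
              (if (i' : ℕ) < k then (⌊b.repr z₁ i'⌋ : ℝ) else 0) := by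
            intro i'
            rw [hz₂, map_sub, Finsupp.sub_apply, map_sum]
            congr 1
            rw [Finsupp.finset_sum_apply]
            have heach : ∀ i : Fin d, (b.repr (⌊b.repr z₁ i⌋ • b i)) i' =
                (if i = i' then (⌊b.repr z₁ i⌋ : ℝ) else 0) := by
              intro i
              rw [map_zsmul, Finsupp.smul_apply, b.repr_self, Finsupp.single_apply]
              split <;> simp
            rw [Finset.sum_congr rfl fun i _ => heach i, Finset.sum_ite_eq']
            simp
          have hSΛ : ((∑ i ∈ Finset.univ.filter (fun i : Fin d => (i : ℕ) < k),
              ⌊b.repr z₁ i⌋ • b i : F') : Fin n → ℝ) ∈ Λ := by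
            rw [AddSubmonoidClass.coe_finset_sum]
            apply Λ.sum_mem
            intro i _
            have hcoei : ((⌊b.repr z₁ i⌋ • b i : F') : Fin n → ℝ) =
                ⌊b.repr z₁ i⌋ • (b i : Fin n → ℝ) := by push_cast; ring
            rw [hcoei, hb i]
            exact Λ.smul_mem _ (hxΛ i)
          have hz₂Λ : (z₂ : Fin n → ℝ) ∈ Λ := by
            have hc : (z₂ : Fin n → ℝ) = (z₁ : Fin n → ℝ) -
                ((∑ i ∈ Finset.univ.filter (fun i : Fin d => (i : ℕ) < k),
                  ⌊b.repr z₁ i⌋ • b i : F') : Fin n → ℝ) := by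
              rw [hz₂]; push_cast; ring
            rw [hc]
            exact Λ.sub_mem hz₁Λ hSΛ
          have hz₂A : z₂ ∈ A := by
            refine ⟨hz₂Λ, ?_, ?_, ?_, ?_⟩
            · intro i hi
              rw [hrepr₂, hz₁r i hi, if_neg (Nat.lt_asymm hi)]
              ring
            · intro i hi
              rw [hrepr₂, if_pos hi]
              have h1 : b.repr z₁ i - (⌊b.repr z₁ i⌋ : ℝ) = Int.fract (b.repr z₁ i) := rfl
              rw [h1, abs_of_nonneg (Int.fract_nonneg _)]
              exact (Int.fract_lt_one _).le
            · rw [hrepr₂, if_neg (lt_irrefl k)]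
              have : b.repr z₁ κ - 0 = s - (q : ℝ) * t₀ := by rw [hz₁κ]; ring
              rw [this]
              exact hrpos
            · rw [hrepr₂, if_neg (lt_irrefl k)]
              have : b.repr z₁ κ - 0 = s - (q : ℝ) * t₀ := by rw [hz₁κ]; ring
              rw [this]
              exact le_trans hrlt.le ht₀le1
          have hcontra : t₀ ≤ b.repr z₂ κ := hmin z₂ hz₂A
          rw [hrepr₂, if_neg (lt_irrefl k)] at hcontra
          rw [hz₁κ] at hcontra
          linarith
        have hz₁r' : ∀ i : Fin d, k ≤ (i : ℕ) → b.repr z₁ i = 0 := by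
          intro i hi
          rcases eq_or_lt_of_le hi with h | h
          · have hiκ : i = κ := Fin.ext h.symm
            rw [hiκ]; exact hκ0
          · exact hz₁r i h
        have hmem := hw2 z₁ hz₁Λ hz₁r'
        have hsub2 : (w '' {j : Fin d | (j : ℕ) < k}) ⊆
            (Function.update w κ u '' {j : Fin d | (j : ℕ) < k + 1}) := by
          rintro v ⟨j, hj, rfl⟩
          have hjκ : j ≠ κ := by
            intro h; subst h; exact lt_irrefl k hj
          exact ⟨j, Nat.lt_succ_of_lt hj, by rw [Function.update_of_ne hjκ]⟩
        have hz₁mem : z₁ ∈ Submodule.span ℤ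
            (Function.update w κ u '' {j : Fin d | (j : ℕ) < k + 1}) :=
          Submodule.span_mono hsub2 hmem
        have humem : u ∈ Submodule.span ℤ
            (Function.update w κ u '' {j : Fin d | (j : ℕ) < k + 1}) :=
          Submodule.subset_span ⟨κ, Nat.lt_succ_self k, Function.update_self κ u w⟩
        have hzeq : z = z₁ + q • u := by rw [hz₁]; abel
        rw [hzeq]
        exact Submodule.add_mem _ hz₁mem (Submodule.smul_mem _ q humem)
  -- conclude from the case k = d
  obtain ⟨w, hw1, hw2⟩ := main d le_rfl
  have hwli : LinearIndependent ℝ w := by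
    have htri : Matrix.BlockTriangular (b.toMatrix w) id := by
      intro i j hij
      rw [Module.Basis.toMatrix_apply]
      exact (hw1 j j.isLt).2.2.1 i hij
    have hdval : b.det w = ∏ i, b.toMatrix w i i := by
      rw [Module.Basis.det_apply]; exact Matrix.det_of_upperTriangular htri
    have hpos : 0 < ∏ i, b.toMatrix w i i := Finset.prod_pos fun i _ => by
      rw [Module.Basis.toMatrix_apply]; exact (hw1 i i.isLt).2.2.2
    have hunit : IsUnit (b.det w) := by
      rw [hdval]; exact isUnit_iff_ne_zero.2 (ne_of_gt hpos)
    exact ((Module.Basis.is_basis_iff_det b).2 hunit).1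
  refine ⟨fun j => ((w j : F') : Fin n → ℝ), fun j => (hw1 j j.isLt).1, ?_, ?_, ?_⟩
  · exact hwli.map' F'.subtype (Submodule.ker_subtype F')
  · apply le_antisymm
    · rw [Submodule.span_le]
      rintro v ⟨j, rfl⟩
      exact (hw1 j j.isLt).1
    · intro z hz
      have hzF : z ∈ F' := hspan z hz
      have hmem : (⟨z, hzF⟩ : F') ∈ Submodule.span ℤ (w '' {j : Fin d | (j : ℕ) < d}) :=
        hw2 ⟨z, hzF⟩ hz (fun i hi => absurd i.isLt (not_lt.2 hi))
      have himg : w '' {j : Fin d | (j : ℕ) < d} = Set.range w := by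
        have huniv : {j : Fin d | (j : ℕ) < d} = Set.univ :=
          Set.eq_univ_of_forall fun j => j.isLt
        rw [huniv, Set.image_univ]
      rw [himg] at hmem
      have hmap := Submodule.mem_map_of_mem (f := F'.subtype.restrictScalars ℤ) hmem
      rw [Submodule.map_span] at hmap
      have himg2 : (⇑(F'.subtype.restrictScalars ℤ)) '' Set.range w =
          Set.range (fun j => ((w j : F') : Fin n → ℝ)) := by
        rw [← Set.range_comp]
        rfl
      rwa [himg2] at hmap
  · intro j
    refine ⟨fun i => b.repr (w j) i, (hw1 j j.isLt).2.1, ?_⟩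
    exact hcoe (w j)

lemma extract_basis {n d : ℕ} (F : Submodule ℝ (Fin n → ℝ)) (hd : d = Module.finrank ℝ F)
    (s : Set (Fin n → ℝ)) (hs : Submodule.span ℝ s = F) :
    ∃ x : Fin d → (Fin n → ℝ), (∀ i, x i ∈ s) ∧ LinearIndependent ℝ x ∧
      Submodule.span ℝ (Set.range x) = F := by
  obtain ⟨b, hbs, hbspan, hbli⟩ := exists_linearIndependent ℝ s
  have hfin : b.Finite := hbli.setFinite
  haveI : Fintype b := hfin.fintype
  rw [hs] at hbspan
  have hcard : b.toFinset.card = d := by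
    rw [hd, ← hbspan]; exact (finrank_span_set_eq_card hbli).symm
  have hcard' : Fintype.card b = d := by rwa [Set.toFinset_card] at hcard
  obtain e := Fintype.equivFinOfCardEq hcard'
  refine ⟨fun i => (e.symm i : Fin n → ℝ), fun i => hbs (e.symm i).2, ?_, ?_⟩
  · exact hbli.comp e.symm e.symm.injective
  · rw [← hbspan]
    congr 1
    ext v
    constructor
    · rintro ⟨i, rfl⟩; exact (e.symm i).2
    · intro hv; exact ⟨e ⟨v, hv⟩, by simp⟩

lemma lattice_spans {n : ℕ} (F : Submodule ℝ (Fin n → ℝ)) (hFrat : IsRationalSubspace F)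
    (Λ : Submodule ℤ (Fin n → ℝ))
    (hΛ : ∀ x : Fin n → ℝ, x ∈ Λ ↔ x ∈ F ∧ ∀ i, ∃ m : ℤ, x i = (m : ℝ)) :
    Submodule.span ℝ {z : Fin n → ℝ | z ∈ Λ} = F := by
  obtain ⟨S, hSrat, hSspan⟩ := hFrat
  apply le_antisymm
  · rw [Submodule.span_le]
    intro z hz
    exact ((hΛ z).1 hz).1
  · rw [hSspan, Submodule.span_le]
    intro v hv
    have hvF : v ∈ F := by rw [hSspan]; exact Submodule.subset_span hv
    choose r hr using hSrat v hv
    set D : ℕ := ∏ i, (r i).den with hD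
    have hDpos : 0 < D := Finset.prod_pos fun i _ => (r i).pos
    have hDne : (D : ℝ) ≠ 0 := Nat.cast_ne_zero.2 hDpos.ne'
    have hmem : (D : ℝ) • v ∈ Λ := by
      rw [hΛ]
      refine ⟨Submodule.smul_mem F _ hvF, fun i => ?_⟩
      obtain ⟨c, hc⟩ : ((r i).den : ℤ) ∣ (D : ℤ) := by
        exact_mod_cast Int.natCast_dvd_natCast.2 (Finset.dvd_prod_of_mem _ (Finset.mem_univ i))
      refine ⟨(r i).num * c, ?_⟩
      have hqq : (D : ℚ) * r i = ((r i).num * c : ℤ) := by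
        have hDq : (D : ℚ) = ((r i).den : ℚ) * (c : ℚ) := by exact_mod_cast hc
        rw [hDq]
        push_cast
        calc ((r i).den : ℚ) * (c : ℚ) * r i = (c : ℚ) * (((r i).den : ℚ) * r i) := by ring
          _ = (c : ℚ) * (r i).num := by rw [Rat.den_mul_eq_num]
          _ = ((r i).num : ℚ) * c := by ring
      have : ((D : ℝ) * (r i : ℝ)) = (((r i).num * c : ℤ) : ℝ) := by exact_mod_cast congrArg (Rat.cast (K := ℝ)) hqq
      rw [Pi.smul_apply, smul_eq_mul, hr i, this]
    have : v = (D : ℝ)⁻¹ • ((D : ℝ) • v) := by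
      rw [smul_smul, inv_mul_cancel₀ hDne, one_smul]
    rw [this]
    exact Submodule.smul_mem _ _ (Submodule.subset_span hmem)

lemma dirichlet_span {n d : ℕ} [NeZero n] (α : Fin n → ℝ) (hnorm : 0 < ‖α‖) (hα0 : ‖α‖ = |α 0|)
    (F : Submodule ℝ (Fin n → ℝ)) (hαF : α ∈ F)
    (hFmin : ∀ G : Submodule ℝ (Fin n → ℝ), IsRationalSubspace G → α ∈ G → F ≤ G)
    (Λ : Submodule ℤ (Fin n → ℝ))
    (hΛ : ∀ x : Fin n → ℝ, x ∈ Λ ↔ x ∈ F ∧ ∀ i, ∃ m : ℤ, x i = (m : ℝ))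
    (e : Fin d → (Fin n → ℝ)) (heΛ : ∀ i, e i ∈ Λ)
    (hespan : Submodule.span ℝ (Set.range e) = F)
    (Q : ℝ) (hQ : 0 < Q) :
    Submodule.span ℝ {z : Fin n → ℝ | z ∈ Λ ∧ ‖z 0 • α - α 0 • z‖ ≤ Q⁻¹} = F := by
  have hA0 : α 0 ≠ 0 := by
    intro h
    rw [hα0, h, abs_zero] at hnorm
    exact lt_irrefl _ hnorm
  obtain ⟨c, hc⟩ : ∃ c : Fin d → ℝ, ∑ i, c i • e i = α :=
    (Submodule.mem_span_range_iff_exists_fun ℝ).1 (by rw [hespan]; exact hαF)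
  set A0 : ℝ := α 0 with hA0def
  set C : ℝ := ∑ i, ‖e i‖ with hCdef
  have hC0 : 0 ≤ C := Finset.sum_nonneg fun i _ => norm_nonneg _
  -- Dirichlet pigeonhole step
  have approx : ∀ N : ℕ, 0 < N → ∃ (q : ℕ) (z : Fin n → ℝ),
      1 ≤ q ∧ z ∈ Λ ∧ ‖((q : ℝ) / A0) • α - z‖ ≤ C / N := by
    intro N hN
    set θ : ℕ → Fin d → ℝ := fun k i => (k : ℝ) / A0 * c i with hθ
    have hbox : ∀ t : ℝ, (⌊(N : ℝ) * Int.fract t⌋).toNat < N := by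
      intro t
      have h1 : (0 : ℤ) ≤ ⌊(N : ℝ) * Int.fract t⌋ :=
        Int.floor_nonneg.2 (mul_nonneg (Nat.cast_nonneg N) (Int.fract_nonneg t))
      have h2 : ⌊(N : ℝ) * Int.fract t⌋ < (N : ℤ) := by
        apply Int.floor_lt.2
        push_cast
        calc (N : ℝ) * Int.fract t < (N : ℝ) * 1 :=
              mul_lt_mul_of_pos_left (Int.fract_lt_one t) (by exact_mod_cast hN)
          _ = N := mul_one _
      omega
    set g : Fin (N ^ d + 1) → (Fin d → Fin N) :=
      fun k i => ⟨(⌊(N : ℝ) * Int.fract (θ (k : ℕ) i)⌋).toNat, hbox _⟩ with hg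
    obtain ⟨k, l, hkl, hgkl⟩ := Fintype.exists_ne_map_eq_of_card_lt g (by
      simp only [Fintype.card_fun, Fintype.card_fin]
      exact Nat.lt_succ_self _)
    have key : ∀ k l : Fin (N ^ d + 1), (l : ℕ) < (k : ℕ) → g k = g l →
        ∃ (q : ℕ) (z : Fin n → ℝ), 1 ≤ q ∧ z ∈ Λ ∧ ‖((q : ℝ) / A0) • α - z‖ ≤ C / N := by
      clear hkl hgkl k l
      intro k l hlt hgkl
      set q : ℕ := (k : ℕ) - (l : ℕ) with hqdef
      have hq1 : 1 ≤ q := Nat.sub_pos_of_lt hlt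
      have hqcast : (q : ℝ) = ((k : ℕ) : ℝ) - ((l : ℕ) : ℝ) := by
        rw [hqdef]
        push_cast [Nat.cast_sub hlt.le]
        ring
      set m : Fin d → ℤ := fun i => ⌊θ (k : ℕ) i⌋ - ⌊θ (l : ℕ) i⌋ with hm
      set z : Fin n → ℝ := ∑ i, (m i : ℝ) • e i with hz
      have hzΛ : z ∈ Λ := by
        apply Submodule.sum_mem
        intro i _
        rw [Int.cast_smul_eq_zsmul]
        exact Submodule.smul_mem _ _ (heΛ i)
      have hfr : ∀ i, |θ (k : ℕ) i - θ (l : ℕ) i - (m i : ℝ)| < 1 / N := by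
        intro i
        have hco := congrArg Fin.val (congrFun hgkl i)
        have hfl : ⌊(N : ℝ) * Int.fract (θ (k : ℕ) i)⌋ = ⌊(N : ℝ) * Int.fract (θ (l : ℕ) i)⌋ := by
          have h1 : (0 : ℤ) ≤ ⌊(N : ℝ) * Int.fract (θ (k : ℕ) i)⌋ :=
            Int.floor_nonneg.2 (mul_nonneg (Nat.cast_nonneg N) (Int.fract_nonneg _))
          have h2 : (0 : ℤ) ≤ ⌊(N : ℝ) * Int.fract (θ (l : ℕ) i)⌋ :=
            Int.floor_nonneg.2 (mul_nonneg (Nat.cast_nonneg N) (Int.fract_nonneg _))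
          simp only [hg] at hco
          omega
        have habs := Int.abs_sub_lt_one_of_floor_eq_floor hfl
        have hident : θ (k : ℕ) i - θ (l : ℕ) i - (m i : ℝ) =
            Int.fract (θ (k : ℕ) i) - Int.fract (θ (l : ℕ) i) := by
          rw [Int.fract, Int.fract, hm]
          push_cast
          ring
        rw [hident]
        have hNR : (0 : ℝ) < N := by exact_mod_cast hN
        rw [lt_div_iff₀ hNR]
        calc |Int.fract (θ (k : ℕ) i) - Int.fract (θ (l : ℕ) i)| * N
            = |(N : ℝ) * Int.fract (θ (k : ℕ) i) - (N : ℝ) * Int.fract (θ (l : ℕ) i)| := by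
              rw [← mul_sub, abs_mul, abs_of_pos hNR]; ring
          _ < 1 := habs
      refine ⟨q, z, hq1, hzΛ, ?_⟩
      have hid : ((q : ℝ) / A0) • α - z =
          ∑ i, (θ (k : ℕ) i - θ (l : ℕ) i - (m i : ℝ)) • e i := by
        rw [← hc, Finset.smul_sum, hz, ← Finset.sum_sub_distrib]
        apply Finset.sum_congr rfl
        intro i _
        rw [smul_smul, ← sub_smul]
        congr 1
        rw [hθ]
        simp only []
        rw [hqcast]
        ring
      rw [hid]
      calc ‖∑ i, (θ (k : ℕ) i - θ (l : ℕ) i - (m i : ℝ)) • e i‖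
          ≤ ∑ i, ‖(θ (k : ℕ) i - θ (l : ℕ) i - (m i : ℝ)) • e i‖ := norm_sum_le _ _
        _ ≤ ∑ i, (1 / N) * ‖e i‖ := by
            apply Finset.sum_le_sum
            intro i _
            rw [norm_smul, Real.norm_eq_abs]
            exact mul_le_mul_of_nonneg_right (hfr i).le (norm_nonneg _)
        _ = C / N := by rw [← Finset.mul_sum, hCdef]; ring
    rcases lt_or_gt_of_ne (fun h : (k : ℕ) = (l : ℕ) => hkl (Fin.ext h)) with h | h
    · exact key l k h hgkl.symm
    · exact key k l h hgkl
  -- the span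
  apply le_antisymm
  · rw [Submodule.span_le]
    rintro z ⟨hzΛ, -⟩
    exact ((hΛ z).1 hzΛ).1
  · apply hFmin
    · refine ⟨_, ?_, rfl⟩
      rintro v ⟨hvΛ, -⟩ i
      obtain ⟨m, hm⟩ := ((hΛ v).1 hvΛ).2 i
      exact ⟨(m : ℚ), by rw [hm]; norm_num⟩
    · -- α belongs to the closure of the span
      set W := Submodule.span ℝ {z : Fin n → ℝ | z ∈ Λ ∧ ‖z 0 • α - α 0 • z‖ ≤ Q⁻¹} with hW
      have hclosed : IsClosed (W : Set (Fin n → ℝ)) := Submodule.closed_of_finiteDimensional W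
      have hmem : α ∈ closure (W : Set (Fin n → ℝ)) := by
        rw [Metric.mem_closure_iff]
        intro ε hε
        obtain ⟨N, hN⟩ := exists_nat_gt (max (2 * ‖α‖ * (C + 1) * Q) (‖α‖ * (C + 1) / ε))
        have hN1 : 2 * ‖α‖ * (C + 1) * Q < N := lt_of_le_of_lt (le_max_left _ _) hN
        have hN2 : ‖α‖ * (C + 1) / ε < N := lt_of_le_of_lt (le_max_right _ _) hN
        have hNpos : 0 < N := by
          have : (0 : ℝ) < N :=
            lt_of_le_of_lt (by positivity : (0:ℝ) ≤ 2 * ‖α‖ * (C + 1) * Q) hN1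
          exact_mod_cast this
        have hNR : (0 : ℝ) < N := by exact_mod_cast hNpos
        obtain ⟨q, z, hq1, hzΛ, hzb⟩ := approx N hNpos
        have hqR : (0 : ℝ) < q := by exact_mod_cast hq1
        have hqR1 : (1 : ℝ) ≤ q := by exact_mod_cast hq1
        set ζ : Fin n → ℝ := ((q : ℝ) / A0) • α - z with hζ
        have hζb : ‖ζ‖ ≤ C / N := hzb
        have hζ0 : |ζ 0| ≤ C / N := le_trans (norm_le_pi_norm ζ 0) hζb
        have hz0 : z 0 = (q : ℝ) - ζ 0 := by
          have h1 : ζ 0 = (q : ℝ) / A0 * α 0 - z 0 := rfl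
          have h2 : (q : ℝ) / A0 * α 0 = q := by
            rw [← hA0def]; field_simp
          rw [h1, h2]; ring
        have hzj : ∀ j, z j = (q : ℝ) / A0 * α j - ζ j := by
          intro j
          have : ζ j = (q : ℝ) / A0 * α j - z j := rfl
          rw [this]; ring
        have hkey : z 0 • α - A0 • z = A0 • ζ - ζ 0 • α := by
          funext j
          simp only [Pi.sub_apply, Pi.smul_apply, smul_eq_mul]
          rw [hz0, hzj j]
          field_simp
          ring
        have hzS : z ∈ {v : Fin n → ℝ | v ∈ Λ ∧ ‖v 0 • α - α 0 • v‖ ≤ Q⁻¹} := by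
          refine ⟨hzΛ, ?_⟩
          rw [← hA0def, hkey]
          calc ‖A0 • ζ - ζ 0 • α‖ ≤ ‖A0 • ζ‖ + ‖ζ 0 • α‖ := norm_sub_le _ _
            _ = |A0| * ‖ζ‖ + |ζ 0| * ‖α‖ := by rw [norm_smul, norm_smul, Real.norm_eq_abs, Real.norm_eq_abs]
            _ ≤ ‖α‖ * (C / N) + (C / N) * ‖α‖ := by
                apply add_le_add
                · rw [← hα0]; exact mul_le_mul_of_nonneg_left hζb (norm_nonneg _)
                · exact mul_le_mul_of_nonneg_right hζ0 (norm_nonneg _)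
            _ = 2 * ‖α‖ * C / N := by ring
            _ ≤ Q⁻¹ := by
                rw [inv_eq_one_div, div_le_div_iff₀ hNR hQ]
                nlinarith [hnorm, hC0, hQ, hN1]
        refine ⟨(A0 / (q : ℝ)) • z, Submodule.smul_mem _ _ (Submodule.subset_span hzS), ?_⟩
        have hidd : α - (A0 / (q : ℝ)) • z = (A0 / (q : ℝ)) • ζ := by
          rw [hζ, smul_sub, smul_smul]
          have : A0 / (q : ℝ) * ((q : ℝ) / A0) = 1 := by
            field_simp
          rw [this, one_smul]
        rw [dist_eq_norm, hidd, norm_smul, Real.norm_eq_abs]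
        have habs : |A0 / (q : ℝ)| ≤ ‖α‖ := by
          rw [abs_div, abs_of_pos hqR, hα0]
          exact div_le_self (abs_nonneg _) hqR1
        calc |A0 / (q : ℝ)| * ‖ζ‖ ≤ ‖α‖ * (C / N) :=
              mul_le_mul habs hζb (norm_nonneg _) (norm_nonneg _)
          _ ≤ ‖α‖ * ((C + 1) / N) := by
              apply mul_le_mul_of_nonneg_left _ (norm_nonneg _)
              exact (div_le_div_iff_of_pos_right hNR).2 (by linarith)
          _ < ε := by
              rw [div_lt_iff₀ hε] at hN2
              rw [mul_div_assoc', div_lt_iff₀ hNR]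
              linarith
      rwa [hclosed.closure_eq] at hmem

/-- Proposition `corutile`: for α ∈ ℝⁿ∖{0} with d effective frequencies and
any Q > max(1, d|α|⁻¹), there exist d periodic vectors ω₁,…,ω_d with periods T₁,…,T_d
such that T₁ω₁,…,T_dω_d form a ℤ-basis of Λ = ℤⁿ ∩ F, and for each j:
|α − ω_j| ≤ d(|α|T_jQ)⁻¹ and |α|⁻¹ ≤ T_j ≤ |α|⁻¹dΨ_d(Q).
Here the norm on Fin n → ℝ is the sup norm, F is the smallest rational subspace
containing α, and Ψ_d is given by its defining formula. -/
theorem stmt_9 (n : ℕ) [NeZero n] (hn : 2 ≤ n)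
    (α : Fin n → ℝ) (hα : α ≠ 0) (hα0 : ‖α‖ = |α 0|)
    (F : Submodule ℝ (Fin n → ℝ)) (hαF : α ∈ F)
    (hFrat : IsRationalSubspace F)
    (hFmin : ∀ G : Submodule ℝ (Fin n → ℝ), IsRationalSubspace G → α ∈ G → F ≤ G)
    (d : ℕ) (hd : d = Module.finrank ℝ F)
    (Λ : Submodule ℤ (Fin n → ℝ))
    (hΛ : ∀ x : Fin n → ℝ, x ∈ Λ ↔ x ∈ F ∧ ∀ i, ∃ m : ℤ, x i = (m : ℝ))
    (Ψ : ℝ → ℝ)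
    (hΨ : ∀ Q : ℝ, 1 ≤ Q → Ψ Q = sInf {K : ℝ | 0 < K ∧
      ∃ x : Fin d → (Fin n → ℝ), LinearIndependent ℝ x ∧
        ∀ i, x i ∈ Λ ∧ ‖x i‖ ≤ K ∧ ‖x i 0 • α - α 0 • x i‖ ≤ Q⁻¹})
    (Q : ℝ) (hQ : max 1 ((d : ℝ) * ‖α‖⁻¹) < Q) :
    ∃ (ω : Fin d → (Fin n → ℝ)) (T : Fin d → ℝ),
      (∀ j, 0 < T j) ∧
      (∀ j, T j • ω j ∈ Λ) ∧
      LinearIndependent ℤ (fun j => T j • ω j) ∧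
      Submodule.span ℤ (Set.range fun j => T j • ω j) = Λ ∧
      ∀ j, ‖α - ω j‖ ≤ (d : ℝ) * (‖α‖ * T j * Q)⁻¹ ∧
        ‖α‖⁻¹ ≤ T j ∧ T j ≤ ‖α‖⁻¹ * (d : ℝ) * Ψ Q := by
  classical
  have hnorm : 0 < ‖α‖ := norm_pos_iff.2 hα
  have hA0 : α 0 ≠ 0 := by
    intro h
    rw [hα0, h, abs_zero] at hnorm
    exact lt_irrefl _ hnorm
  have hQ1 : 1 < Q := lt_of_le_of_lt (le_max_left _ _) hQ
  have hQ0 : 0 < Q := lt_trans one_pos hQ1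
  have hdQ : (d : ℝ) * ‖α‖⁻¹ < Q := lt_of_le_of_lt (le_max_right _ _) hQ
  have hdinvQ : (d : ℝ) * Q⁻¹ < ‖α‖ := by
    have h : (d : ℝ) < Q * ‖α‖ := by
      calc (d : ℝ) = (d : ℝ) * ‖α‖⁻¹ * ‖α‖ := by field_simp
        _ < Q * ‖α‖ := mul_lt_mul_of_pos_right hdQ hnorm
    calc (d : ℝ) * Q⁻¹ < (Q * ‖α‖) * Q⁻¹ := mul_lt_mul_of_pos_right h (inv_pos.2 hQ0)
      _ = ‖α‖ := by field_simp
  have hint : ∀ z ∈ Λ, ∀ i, ∃ m : ℤ, z i = (m : ℝ) := fun z hz => ((hΛ z).1 hz).2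
  have hd1 : 1 ≤ d := by
    rw [hd]
    haveI : Nontrivial F :=
      ⟨⟨α, hαF⟩, 0, fun h => hα (by simpa using congrArg Subtype.val h)⟩
    exact Module.finrank_pos
  haveI : Nonempty (Fin d) := ⟨⟨0, hd1⟩⟩
  -- a basis of F inside the lattice
  have hsp := lattice_spans F hFrat Λ hΛ
  obtain ⟨e, heΛ, heli, hespan⟩ := extract_basis F hd _ hsp
  -- Dirichlet: lattice points in the slab span F
  have hdir := dirichlet_span α hnorm hα0 F hαF hFmin Λ hΛ e heΛ hespan Q hQ0
  -- the Ψ set is nonempty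
  set SΨ : Set ℝ := {K : ℝ | 0 < K ∧
      ∃ x : Fin d → (Fin n → ℝ), LinearIndependent ℝ x ∧
        ∀ i, x i ∈ Λ ∧ ‖x i‖ ≤ K ∧ ‖x i 0 • α - α 0 • x i‖ ≤ Q⁻¹} with hSΨdef
  have hΨQ : Ψ Q = sInf SΨ := hΨ Q hQ1.le
  obtain ⟨x₀, hx₀S, hx₀li, hx₀span⟩ := extract_basis F hd _ hdir
  have hSne : SΨ.Nonempty := by
    refine ⟨1 + ∑ i, ‖x₀ i‖, ⟨by positivity, x₀, hx₀li, fun i => ?_⟩⟩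
    refine ⟨(hx₀S i).1, ?_, (hx₀S i).2⟩
    have h1 : ‖x₀ i‖ ≤ ∑ j, ‖x₀ j‖ :=
      Finset.single_le_sum (fun j _ => norm_nonneg _) (Finset.mem_univ i)
    linarith
  have hSbdd : BddBelow SΨ := ⟨0, fun K hK => hK.1.le⟩
  have hΨ0 : 0 ≤ sInf SΨ := le_csInf hSne fun K hK => hK.1.le
  -- attainment of the infimum: a tuple with norms ≤ sInf SΨ
  set Tset : Set (Fin d → (Fin n → ℝ)) := {x | LinearIndependent ℝ x ∧
      ∀ i, x i ∈ Λ ∧ ‖x i‖ ≤ sInf SΨ + 1 ∧ ‖x i 0 • α - α 0 • x i‖ ≤ Q⁻¹} with hTsetdef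
  have hTfin : Tset.Finite := by
    apply Set.Finite.subset (Set.Finite.pi
      (fun _ : Fin d => intvec_finite n (sInf SΨ + 1)))
    rintro x ⟨-, hx⟩ 
    intro i _
    exact ⟨hint _ (hx i).1, (hx i).2.1⟩
  have hTne : Tset.Nonempty := by
    obtain ⟨K, hKS, hKlt⟩ := (csInf_lt_iff hSbdd hSne).1
      (lt_add_of_pos_right _ one_pos)
    obtain ⟨hKpos, x₁, hx₁li, hx₁⟩ := hKS
    exact ⟨x₁, hx₁li, fun i => ⟨(hx₁ i).1, le_trans (hx₁ i).2.1 hKlt.le, (hx₁ i).2.2⟩⟩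
  obtain ⟨x₂, hx₂T', hx₂min'⟩ := Finset.exists_min_image hTfin.toFinset
    (fun x => Finset.univ.sup' Finset.univ_nonempty fun j => ‖x j‖)
    ⟨hTne.some, hTfin.mem_toFinset.2 hTne.some_mem⟩
  have hx₂T : x₂ ∈ Tset := hTfin.mem_toFinset.1 hx₂T'
  obtain ⟨hx₂li, hx₂p⟩ := hx₂T
  have hx₂sup : (Finset.univ.sup' Finset.univ_nonempty fun j => ‖x₂ j‖) ≤ sInf SΨ := by
    apply le_of_forall_pos_le_add
    intro ε hε
    set ε' := min ε 1 with hε'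
    have hε'0 : 0 < ε' := lt_min hε one_pos
    obtain ⟨K, hKS, hKlt⟩ := (csInf_lt_iff hSbdd hSne).1
      (lt_add_of_pos_right (sInf SΨ) hε'0)
    obtain ⟨hKpos, x₃, hx₃li, hx₃⟩ := hKS
    have hx₃T : x₃ ∈ Tset := by
      refine ⟨hx₃li, fun i => ⟨(hx₃ i).1, ?_, (hx₃ i).2.2⟩⟩
      have : ε' ≤ 1 := min_le_right _ _
      have := (hx₃ i).2.1
      linarith
    have h1 := hx₂min' x₃ (hTfin.mem_toFinset.2 hx₃T)
    have h2 : (Finset.univ.sup' Finset.univ_nonempty fun j => ‖x₃ j‖) ≤ K :=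
      Finset.sup'_le _ _ fun j _ => (hx₃ j).2.1
    have h3 : ε' ≤ ε := min_le_left _ _
    linarith
  have hx₂bd : ∀ j, ‖x₂ j‖ ≤ Ψ Q := by
    intro j
    rw [hΨQ]
    exact le_trans (Finset.le_sup' (f := fun j => ‖x₂ j‖) (Finset.mem_univ j)) hx₂sup
  have hx₂Λ : ∀ i, x₂ i ∈ Λ := fun i => (hx₂p i).1
  -- x₂ spans F
  have hx₂spanF : Submodule.span ℝ (Set.range x₂) = F := by
    apply Submodule.eq_of_le_of_finrank_le
    · rw [Submodule.span_le]
      rintro v ⟨j, rfl⟩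
      exact ((hΛ (x₂ j)).1 (hx₂Λ j)).1
    · rw [← hd, finrank_span_eq_card hx₂li, Fintype.card_fin]
  have hx₂span : ∀ z : Fin n → ℝ, z ∈ Λ → z ∈ Submodule.span ℝ (Set.range x₂) := by
    intro z hz
    rw [hx₂spanF]
    exact ((hΛ z).1 hz).1
  -- the adapted bounded basis
  obtain ⟨y, hyΛ, hyli, hyspan, hyc⟩ := bounded_basis Λ hint x₂ hx₂li hx₂Λ hx₂span
  -- bounds for y
  have hybd : ∀ j, ‖y j‖ ≤ (d : ℝ) * Ψ Q ∧
      ‖y j 0 • α - α 0 • y j‖ ≤ (d : ℝ) * Q⁻¹ := by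
    intro j
    obtain ⟨c, hc1, hc2⟩ := hyc j
    constructor
    · rw [hc2]
      calc ‖∑ i, c i • x₂ i‖ ≤ ∑ i, ‖c i • x₂ i‖ := norm_sum_le _ _
        _ ≤ ∑ i, Ψ Q := by
            apply Finset.sum_le_sum
            intro i _
            rw [norm_smul, Real.norm_eq_abs]
            calc |c i| * ‖x₂ i‖ ≤ 1 * ‖x₂ i‖ :=
                  mul_le_mul_of_nonneg_right (hc1 i) (norm_nonneg _)
              _ = ‖x₂ i‖ := one_mul _
              _ ≤ Ψ Q := hx₂bd i
        _ = (d : ℝ) * Ψ Q := by rw [Finset.sum_const, Finset.card_univ, Fintype.card_fin,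
              nsmul_eq_mul]
    · have hkey : y j 0 • α - α 0 • y j = ∑ i, c i • (x₂ i 0 • α - α 0 • x₂ i) := by
        funext t
        have h0 : y j 0 = ∑ i, c i * x₂ i 0 := by
          rw [hc2]; rw [Finset.sum_apply]; simp [Pi.smul_apply, smul_eq_mul]
        have ht : y j t = ∑ i, c i * x₂ i t := by
          rw [hc2]; rw [Finset.sum_apply]; simp [Pi.smul_apply, smul_eq_mul]
        simp only [Pi.sub_apply, Pi.smul_apply, smul_eq_mul, Finset.sum_apply]
        rw [h0, ht, Finset.sum_mul, Finset.mul_sum, ← Finset.sum_sub_distrib]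
        apply Finset.sum_congr rfl
        intro i _
        ring
      rw [hkey]
      calc ‖∑ i, c i • (x₂ i 0 • α - α 0 • x₂ i)‖
          ≤ ∑ i, ‖c i • (x₂ i 0 • α - α 0 • x₂ i)‖ := norm_sum_le _ _
        _ ≤ ∑ i, Q⁻¹ := by
            apply Finset.sum_le_sum
            intro i _
            rw [norm_smul, Real.norm_eq_abs]
            calc |c i| * ‖x₂ i 0 • α - α 0 • x₂ i‖ ≤ 1 * ‖x₂ i 0 • α - α 0 • x₂ i‖ :=
                  mul_le_mul_of_nonneg_right (hc1 i) (norm_nonneg _)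
              _ = ‖x₂ i 0 • α - α 0 • x₂ i‖ := one_mul _
              _ ≤ Q⁻¹ := (hx₂p i).2.2
        _ = (d : ℝ) * Q⁻¹ := by rw [Finset.sum_const, Finset.card_univ, Fintype.card_fin,
              nsmul_eq_mul]
  -- each y j has a nonzero integer first coordinate
  have hy0 : ∀ j, 1 ≤ |y j 0| := by
    intro j
    obtain ⟨m, hm⟩ := hint _ (hyΛ j) 0
    have hmne : m ≠ 0 := by
      intro h0
      have hyj0 : y j 0 = 0 := by rw [hm, h0]; norm_num
      have h1 : y j 0 • α - α 0 • y j = -(α 0 • y j) := by rw [hyj0]; simp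
      have h2 : ‖y j 0 • α - α 0 • y j‖ = ‖α‖ * ‖y j‖ := by
        rw [h1, norm_neg, norm_smul, Real.norm_eq_abs, ← hα0]
      have h3 : ‖α‖ * ‖y j‖ ≤ (d : ℝ) * Q⁻¹ := h2 ▸ (hybd j).2
      have h4 : ‖y j‖ < 1 := by
        by_contra h4
        push_neg at h4
        have : ‖α‖ ≤ ‖α‖ * ‖y j‖ := le_mul_of_one_le_right (norm_nonneg _) h4
        linarith
      have h5 : y j = 0 := by
        funext t
        obtain ⟨mt, hmt⟩ := hint _ (hyΛ j) t
        have h6 : |y j t| < 1 := lt_of_le_of_lt (norm_le_pi_norm (y j) t) h4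
        rw [hmt] at h6 ⊢
        have h7 : |mt| < 1 := by exact_mod_cast h6
        have : mt = 0 := by
          rcases abs_lt.1 h7 with ⟨h8, h9⟩
          omega
        rw [this]; norm_num
      exact hyli.ne_zero j h5
    rw [hm]
    exact_mod_cast Int.one_le_abs hmne
  -- sign-corrected basis
  set y' : Fin d → (Fin n → ℝ) := fun j => if 0 < y j 0 / α 0 then y j else -(y j) with hy'def
  set T : Fin d → ℝ := fun j => y' j 0 / α 0 with hTdef
  have hy'cases : ∀ j, y' j = y j ∨ y' j = -(y j) := by
    intro j
    by_cases h : 0 < y j 0 / α 0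
    · left; rw [hy'def]; simp [h]
    · right; rw [hy'def]; simp [h]
  have hy0ne : ∀ j, y j 0 ≠ 0 := by
    intro j h
    have := hy0 j
    rw [h, abs_zero] at this
    linarith
  have hTpos : ∀ j, 0 < T j := by
    intro j
    rw [hTdef]
    by_cases h : 0 < y j 0 / α 0
    · simp only [hy'def, if_pos h]
      exact h
    · simp only [hy'def, if_neg h]
      have h2 : y j 0 / α 0 ≠ 0 := div_ne_zero (hy0ne j) hA0
      have h3 : y j 0 / α 0 < 0 := lt_of_le_of_ne (not_lt.1 h) h2
      have : (-(y j)) 0 / α 0 = -(y j 0 / α 0) := by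
        simp [neg_div]
      rw [this]
      linarith
  have hy'Λ : ∀ j, y' j ∈ Λ := by
    intro j
    rcases hy'cases j with h | h <;> rw [h]
    · exact hyΛ j
    · exact Submodule.neg_mem _ (hyΛ j)
  have hy'norm : ∀ j, ‖y' j‖ = ‖y j‖ := by
    intro j
    rcases hy'cases j with h | h
    · rw [h]
    · rw [h, norm_neg]
  have hy'L : ∀ j, ‖y' j 0 • α - α 0 • y' j‖ = ‖y j 0 • α - α 0 • y j‖ := by
    intro j
    rcases hy'cases j with h | h
    · rw [h]
    · rw [h]
      have hneg : (-(y j)) 0 • α - α 0 • (-(y j)) = -(y j 0 • α - α 0 • y j) := by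
        funext t
        simp only [Pi.neg_apply, Pi.sub_apply, Pi.smul_apply, smul_eq_mul]
        ring
      rw [hneg, norm_neg]
  -- linear independence of y'
  have hy'li : LinearIndependent ℝ y' := by
    have := hyli.units_smul (w := fun j => if 0 < y j 0 / α 0 then 1 else -1)
    convert this using 1
    funext j
    by_cases h : 0 < y j 0 / α 0 <;> simp [hy'def, h, Units.smul_def]
  have hy'liZ : LinearIndependent ℤ y' := by
    apply hy'li.restrict_scalars
    intro a b hab
    have : (a : ℝ) = (b : ℝ) := by simpa using hab
    exact_mod_cast this
  -- span of y'
  have hy'span : Submodule.span ℤ (Set.range y') = Λ := by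
    apply le_antisymm
    · rw [Submodule.span_le]
      rintro v ⟨j, rfl⟩
      exact hy'Λ j
    · rw [← hyspan, Submodule.span_le]
      rintro v ⟨j, rfl⟩
      rcases hy'cases j with h | h
      · rw [← h]
        exact Submodule.subset_span ⟨j, rfl⟩
      · have : y j = -(y' j) := by rw [h, neg_neg]
        rw [this]
        exact Submodule.neg_mem _ (Submodule.subset_span ⟨j, rfl⟩)
  -- define ω
  set ω : Fin d → (Fin n → ℝ) := fun j => (T j)⁻¹ • y' j with hωdef
  have hTω : ∀ j, T j • ω j = y' j := by
    intro j
    rw [hωdef]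
    exact smul_inv_smul₀ (hTpos j).ne' _
  refine ⟨ω, T, hTpos, ?_, ?_, ?_, ?_⟩
  · intro j; rw [hTω j]; exact hy'Λ j
  · have : (fun j => T j • ω j) = y' := funext hTω
    rw [this]; exact hy'liZ
  · have : (fun j => T j • ω j) = y' := funext hTω
    rw [this]; exact hy'span
  · intro j
    have hTj := hTpos j
    have hy'0 : y' j 0 = T j * α 0 := by
      rw [hTdef, div_mul_cancel₀ _ hA0]
    have habs' : |y' j 0| = |y j 0| := by
      rcases hy'cases j with h | h
      · rw [h]
      · rw [h]
        simp
    have hTval : T j = |y j 0| / ‖α‖ := by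
      have h1 : |y' j 0| = T j * ‖α‖ := by
        rw [hy'0, abs_mul, abs_of_pos hTj, ← hα0]
      rw [← habs', h1, mul_div_cancel_right₀ _ hnorm.ne']
    refine ⟨?_, ?_, ?_⟩
    · -- approximation bound
      have hid : α - ω j = ((T j)⁻¹ * (α 0)⁻¹) • (y' j 0 • α - α 0 • y' j) := by
        funext t
        simp only [Pi.sub_apply, Pi.smul_apply, smul_eq_mul, hωdef]
        rw [hy'0]
        field_simp
      rw [hid, norm_smul, Real.norm_eq_abs]
      have h1 : |(T j)⁻¹ * (α 0)⁻¹| = (T j)⁻¹ * ‖α‖⁻¹ := by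
        rw [abs_mul, abs_inv, abs_inv, abs_of_pos hTj, ← hα0]
      rw [h1, hy'L j]
      calc (T j)⁻¹ * ‖α‖⁻¹ * ‖y j 0 • α - α 0 • y j‖
          ≤ (T j)⁻¹ * ‖α‖⁻¹ * ((d : ℝ) * Q⁻¹) := by
            apply mul_le_mul_of_nonneg_left (hybd j).2 (by positivity)
        _ = (d : ℝ) * (‖α‖ * T j * Q)⁻¹ := by
            rw [mul_inv, mul_inv]
            ring
    · -- lower bound for T j
      rw [hTval, inv_eq_one_div]
      exact (div_le_div_iff_of_pos_right hnorm).2 (hy0 j)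
    · -- upper bound for T j
      rw [hTval]
      have h1 : |y j 0| ≤ (d : ℝ) * Ψ Q := le_trans (norm_le_pi_norm (y j) 0) (hybd j).1
      rw [div_le_iff₀ hnorm]
      have h2 : ‖α‖⁻¹ * (d : ℝ) * Ψ Q * ‖α‖ = (d : ℝ) * Ψ Q := by
        field_simp
      rw [h2]
      exact h1
end

section
/- Let ω ∈ ℝⁿ∖{0} be T-periodic (Tω ∈ ℤⁿ) and let P be a bounded real-analytic vector field on 𝕋ⁿ_s. Define [P] = ∫₀¹ P∘X_{Tω}^t dt and V = T∫₀¹ (P − [P])∘X_{Tω}^t · t dt, where X_{Tω}^t(θ) = θ + tTω. Then [V, X_ω] = P − [P], where X_ω is the constant vector field ω and [·,·] is the Lie bracket. -/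
open MeasureTheory Metric Set

/-- The complex strip 𝕋ⁿ_s (modeled by ℤⁿ-periodic functions on {z ∈ ℂⁿ : |Im z| < s}). -/
def strip (n : ℕ) (s : ℝ) : Set (Fin n → ℂ) := {z | ∀ i, |(z i).im| < s}



lemma strip_open (n : ℕ) (s : ℝ) : IsOpen (strip n s) := by
  have : strip n s = ⋂ i, (fun z : Fin n → ℂ => |(z i).im|) ⁻¹' (Iio s) := by
    ext z; simp [strip]
  rw [this]
  exact isOpen_iInter_of_finite fun i =>
    ((_root_.continuous_abs.comp (Complex.continuous_im.comp (continuous_apply i)))).isOpen_preimage _ isOpen_Iio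

lemma cauchy_bound {n : ℕ} {s δ M : ℝ} (hδ : 0 < δ) (hM : 0 ≤ M)
    {P : (Fin n → ℂ) → (Fin n → ℂ)} (hPd : DifferentiableOn ℂ P (strip n s))
    (hPb : ∀ z ∈ strip n s, ‖P z‖ ≤ M)
    {w : Fin n → ℂ} (hw : ∀ i, |(w i).im| + δ < s) :
    ‖fderiv ℂ P w‖ ≤ n * (M / δ) := by
  have hws : w ∈ strip n s := fun i => lt_of_le_of_lt (by linarith [hδ]) (hw i)
  have hdiffw : DifferentiableAt ℂ P w :=
    hPd.differentiableAt ((strip_open n s).mem_nhds hws)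
  set L := fderiv ℂ P w with hL
  refine ContinuousLinearMap.opNorm_le_bound _ (by positivity) fun v => ?_
  have hpart : ∀ i : Fin n, ‖L (fun j => if i = j then (1:ℂ) else 0)‖ ≤ M / δ := by
    intro i
    set e : Fin n → ℂ := fun j => if i = j then (1:ℂ) else 0 with he
    set f : ℂ → (Fin n → ℂ) := fun ζ => P (w + ζ • e) with hf
    have hmem : ∀ ζ : ℂ, ζ ∈ closedBall (0:ℂ) δ → w + ζ • e ∈ strip n s := by
      intro ζ hζ j
      have hζ' : ‖ζ‖ ≤ δ := by simpa [Complex.dist_eq] using hζ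
      have : (w + ζ • e) j = w j + ζ * e j := rfl
      rw [this]
      by_cases hij : i = j
      · simp only [he, if_pos hij, mul_one, Complex.add_im]
        calc |(w j).im + ζ.im| ≤ |(w j).im| + |ζ.im| := abs_add_le _ _
          _ ≤ |(w j).im| + ‖ζ‖ := by linarith [Complex.abs_im_le_norm ζ]
          _ ≤ |(w j).im| + δ := by linarith
          _ < s := hw j
      · simp only [he, if_neg hij, mul_zero, add_zero]
        exact hws j
    have hdiff : DifferentiableOn ℂ f (closedBall (0:ℂ) δ) := by
      apply hPd.comp
      · intro ζ _
        exact (differentiable_const w).differentiableOn.add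
          (((differentiable_id).smul_const e).differentiableOn) _ ‹_›
      · intro ζ hζ; exact hmem ζ hζ
    have hdcl : DiffContOnCl ℂ f (ball (0:ℂ) δ) := by
      apply DifferentiableOn.diffContOnCl
      rwa [closure_ball (0:ℂ) (ne_of_gt hδ)]
    have hsph : ∀ ζ ∈ sphere (0:ℂ) δ, ‖f ζ‖ ≤ M := by
      intro ζ hζ
      exact hPb _ (hmem ζ (sphere_subset_closedBall hζ))
    have hfd : HasDerivAt f (L e) 0 := by
      have hline : HasDerivAt (fun ζ : ℂ => w + ζ • e) e 0 := by
        simpa using ((hasDerivAt_id (0:ℂ)).smul_const e).const_add w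
      have h0 : w + (0:ℂ) • e = w := by simp
      have h1 : HasFDerivAt P (fderiv ℂ P w) ((fun ζ : ℂ => w + ζ • e) 0) := by
        simpa [h0] using hdiffw.hasFDerivAt
      exact h1.comp_hasDerivAt (0:ℂ) hline
    have := Complex.norm_deriv_le_of_forall_mem_sphere_norm_le hδ hdcl hsph
    rwa [hfd.deriv] at this
  calc ‖L v‖ = ‖L (∑ i, v i • fun j => if i = j then (1:ℂ) else 0)‖ := by
        rw [← pi_eq_sum_univ v]
    _ = ‖∑ i, v i • L (fun j => if i = j then (1:ℂ) else 0)‖ := by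
        rw [map_sum]; simp_rw [_root_.map_smul]
    _ ≤ ∑ i, ‖v i • L (fun j => if i = j then (1:ℂ) else 0)‖ := norm_sum_le _ _
    _ ≤ ∑ i : Fin n, ‖v‖ * (M / δ) := by
        apply Finset.sum_le_sum
        intro i _
        rw [norm_smul]
        exact mul_le_mul (norm_le_pi_norm v i) (hpart i) (norm_nonneg _) (norm_nonneg _)
    _ = n * (M / δ) * ‖v‖ := by
        rw [Finset.sum_const, Finset.card_univ, Fintype.card_fin, nsmul_eq_mul]
        ring


set_option maxHeartbeats 1000000 in
/-- for a T-periodic vector ω (Tω ∈ ℤⁿ) and a bounded analytic ℤⁿ-periodic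
vector field P on 𝕋ⁿ_s, setting [P] = ∫₀¹ P∘X_{Tω}^t dt and
V = T∫₀¹ (P − [P])∘X_{Tω}^t · t dt (where X_{Tω}^t is translation by tTω), one has
[V, X_ω] = P − [P]; since X_ω is constant, [V, X_ω](z) = DV(z)·ω. -/
theorem stmt_14 (n : ℕ) (s : ℝ) (hs : 0 < s)
    (ω : Fin n → ℝ) (hω : ω ≠ 0) (T : ℝ) (hT : 0 < T)
    (hperiod : ∀ i, ∃ m : ℤ, T * ω i = (m : ℝ))
    (P : (Fin n → ℂ) → (Fin n → ℂ))
    (hPd : DifferentiableOn ℂ P (strip n s))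
    (hPb : ∃ M, ∀ z ∈ strip n s, ‖P z‖ ≤ M)
    (hPper : ∀ z, ∀ m : Fin n → ℤ, P (z + fun i => (m i : ℂ)) = P z)
    (Pbar V : (Fin n → ℂ) → (Fin n → ℂ))
    (hPbar : ∀ z, Pbar z = ∫ t in (0:ℝ)..1, P (z + fun i => ((t * T * ω i : ℝ) : ℂ)))
    (hV : ∀ z, V z = T • ∫ t in (0:ℝ)..1,
      t • (P (z + fun i => ((t * T * ω i : ℝ) : ℂ)) -
           Pbar (z + fun i => ((t * T * ω i : ℝ) : ℂ)))) :
    ∀ z ∈ strip n s, fderiv ℂ V z (fun i => ((ω i : ℝ) : ℂ)) = P z - Pbar z := by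
  classical
  obtain ⟨M, hM⟩ := hPb
  have h0strip : (0 : Fin n → ℂ) ∈ strip n s := by intro i; simpa using hs
  have hM0 : 0 ≤ M := le_trans (norm_nonneg _) (hM 0 h0strip)
  haveI hne : Nonempty (Fin n) := by
    rcases Nat.eq_zero_or_pos n with h | h
    · exfalso; apply hω; subst h; exact Subsingleton.elim _ _
    · exact ⟨⟨0, h⟩⟩
  choose m hm using hperiod
  set c : Fin n → ℂ := fun i => ((T * ω i : ℝ) : ℂ) with hc
  have hcm : c = fun i => ((m i : ℤ) : ℂ) := by funext i; rw [hc]; push_cast [hm i]; norm_num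
  set ωc : Fin n → ℂ := fun i => ((ω i : ℝ) : ℂ) with hωc
  have hcT : c = T • ωc := by
    funext i
    simp only [hc, hωc, Pi.smul_apply, Complex.real_smul, Complex.ofReal_mul]
  have key : ∀ (t : ℝ) (x : Fin n → ℂ),
      (x + fun i => ((t * T * ω i : ℝ) : ℂ)) = x + t • c := by
    intro t x; funext i
    simp only [Pi.add_apply, Pi.smul_apply, hc, Complex.real_smul,
      Complex.ofReal_mul, mul_assoc]
  have im_line : ∀ (x : Fin n → ℂ) (t : ℝ) (i : Fin n),
      ((x + t • c) i).im = (x i).im := by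
    intro x t i
    simp [hc, Complex.real_smul, ← Complex.ofReal_mul]
  have mem_strip : ∀ x ∈ strip n s, ∀ t : ℝ, x + t • c ∈ strip n s := by
    intro x hx t i; rw [im_line]; exact hx i
  have line_cont : ∀ x ∈ strip n s, Continuous fun t : ℝ => P (x + t • c) := by
    intro x hx
    have h1 : Continuous fun t : ℝ => x + t • c := continuous_const.add (continuous_id.smul continuous_const)
    exact hPd.continuousOn.comp_continuous h1 (mem_strip x hx)
  have per : ∀ x : Fin n → ℂ, Function.Periodic (fun t : ℝ => P (x + t • c)) 1 := by
    intro x t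
    have h1 : x + (t + 1) • c = (x + t • c) + fun i => ((m i : ℤ) : ℂ) := by
      rw [add_smul, one_smul, ← hcm]; abel
    simp only [h1, hPper]
  have hPbar' : ∀ x, Pbar x = ∫ t in (0:ℝ)..1, P (x + t • c) := by
    intro x; rw [hPbar]; simp_rw [key]
  have hPinv : ∀ (x : Fin n → ℂ) (u : ℝ), Pbar (x + u • c) = Pbar x := by
    intro x u
    rw [hPbar', hPbar']
    have h1 : ∀ t : ℝ, x + u • c + t • c = x + (t + u) • c := by
      intro t; rw [add_smul]; abel
    simp_rw [h1]
    have h2 := intervalIntegral.integral_comp_add_right (a := (0:ℝ)) (b := 1)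
      (fun t => P (x + t • c)) u
    rw [h2, zero_add, show (1:ℝ) + u = u + 1 by ring,
      (per x).intervalIntegral_add_eq u 0, zero_add]
  intro z hz
  set a : ℝ := Finset.univ.sup' Finset.univ_nonempty (fun i => |(z i).im|) with ha
  have haz : ∀ i, |(z i).im| ≤ a := fun i => Finset.le_sup' (fun j => |(z j).im|) (Finset.mem_univ i)
  have has : a < s := by
    rw [ha, Finset.sup'_lt_iff]; exact fun i _ => hz i
  set δ : ℝ := (s - a) / 3 with hδdef
  have hδ : 0 < δ := by rw [hδdef]; linarith
  set K : ℝ := n * (M / δ) with hK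
  have hK0 : 0 ≤ K := by positivity
  have himle : ∀ x ∈ Metric.ball z δ, ∀ i, |(x i).im| < a + δ := by
    intro x hx i
    have h1 : |(x i).im - (z i).im| ≤ ‖x - z‖ := by
      calc |(x i).im - (z i).im| = |((x - z) i).im| := by simp [Complex.sub_im]
        _ ≤ ‖(x - z) i‖ := Complex.abs_im_le_norm _
        _ ≤ ‖x - z‖ := norm_le_pi_norm _ i
    have h2 : ‖x - z‖ < δ := by rwa [mem_ball, dist_eq_norm] at hx
    calc |(x i).im| ≤ |(z i).im| + |(x i).im - (z i).im| := by
          have := abs_add_le ((z i).im) ((x i).im - (z i).im); simpa using this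
      _ < a + δ := by have := haz i; linarith
  have ball_sub : Metric.ball z δ ⊆ strip n s := by
    intro x hx i
    have h1 := himle x hx i
    have h2 : a + δ < s := by rw [hδdef]; linarith
    linarith
  have hKb : ∀ x ∈ Metric.ball z δ, ∀ t : ℝ, ‖fderiv ℂ P (x + t • c)‖ ≤ K := by
    intro x hx t
    apply cauchy_bound hδ hM0 hPd hM
    intro i; rw [im_line]
    have h1 := himle x hx i
    have h2 : a + δ + δ < s := by rw [hδdef]; linarith
    linarith
  have hdiffray : ∀ x ∈ Metric.ball z δ, ∀ t : ℝ, DifferentiableAt ℂ P (x + t • c) := by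
    intro x hx t
    exact hPd.differentiableAt ((strip_open n s).mem_nhds (mem_strip x (ball_sub hx) t))
  have hcomp : ∀ (t : ℝ) (x : Fin n → ℂ), DifferentiableAt ℂ P (x + t • c) →
      HasFDerivAt (fun y => P (y + t • c)) (fderiv ℂ P (x + t • c)) x := by
    intro t x hdx
    have h1 : HasFDerivAt (fun y : Fin n → ℂ => y + t • c)
        (ContinuousLinearMap.id ℂ (Fin n → ℂ)) x := (hasFDerivAt_id x).add_const (t • c)
    simpa using hdx.hasFDerivAt.comp x h1
  have line_meas : ∀ x : Fin n → ℂ, Measurable fun t : ℝ => x + t • c := by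
    intro x
    exact (continuous_const.add (continuous_id.smul continuous_const) :
      Continuous fun t : ℝ => x + t • c).measurable
  borelize ((Fin n → ℂ) →L[ℂ] (Fin n → ℂ))
  have smF : ∀ x : Fin n → ℂ, StronglyMeasurable fun t : ℝ => fderiv ℂ P (x + t • c) := by
    intro x
    exact ((measurable_fderiv ℂ P).comp (line_meas x)).stronglyMeasurable
  have smF' : ∀ x : Fin n → ℂ, StronglyMeasurable fun t : ℝ => t • fderiv ℂ P (x + t • c) := by
    intro x
    exact stronglyMeasurable_id.smul (smF x)
  have h1 : HasFDerivAt (fun x => ∫ t in (0:ℝ)..1, t • P (x + t • c))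
      (∫ t in (0:ℝ)..1, t • fderiv ℂ P (z + t • c)) z := by
    apply intervalIntegral.hasFDerivAt_integral_of_dominated_of_fderiv_le
      (F' := fun x t => t • fderiv ℂ P (x + t • c)) (bound := fun _ => K) (Metric.ball_mem_nhds z hδ)
    · filter_upwards [Metric.ball_mem_nhds z hδ] with x hx
      exact ((continuous_id.smul (line_cont x (ball_sub hx)))).aestronglyMeasurable
    · exact ((continuous_id.smul (line_cont z hz))).intervalIntegrable 0 1
    · exact (smF' z).aestronglyMeasurable
    · apply Filter.Eventually.of_forall
      intro t ht x hx
      rw [Set.uIoc_of_le (zero_le_one)] at ht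
      calc ‖t • fderiv ℂ P (x + t • c)‖ = |t| * ‖fderiv ℂ P (x + t • c)‖ := by
            rw [norm_smul, Real.norm_eq_abs]
        _ ≤ 1 * K := mul_le_mul (by rw [abs_of_pos ht.1]; exact ht.2)
            (hKb x hx t) (norm_nonneg _) zero_le_one
        _ = K := one_mul K
    · exact intervalIntegrable_const
    · apply Filter.Eventually.of_forall
      intro t ht x hx
      exact (hcomp t x (hdiffray x hx t)).const_smul t
  have h0 : HasFDerivAt (fun x => ∫ t in (0:ℝ)..1, P (x + t • c))
      (∫ t in (0:ℝ)..1, fderiv ℂ P (z + t • c)) z := by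
    apply intervalIntegral.hasFDerivAt_integral_of_dominated_of_fderiv_le
      (F' := fun x t => fderiv ℂ P (x + t • c)) (bound := fun _ => K) (Metric.ball_mem_nhds z hδ)
    · filter_upwards [Metric.ball_mem_nhds z hδ] with x hx
      exact (line_cont x (ball_sub hx)).aestronglyMeasurable
    · exact (line_cont z hz).intervalIntegrable 0 1
    · exact (smF z).aestronglyMeasurable
    · exact Filter.Eventually.of_forall fun t ht x hx => hKb x hx t
    · exact intervalIntegrable_const
    · exact Filter.Eventually.of_forall fun t ht x hx => hcomp t x (hdiffray x hx t)
  have hPbarF : HasFDerivAt Pbar (∫ t in (0:ℝ)..1, fderiv ℂ P (z + t • c)) z := by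
    have : Pbar = fun x => ∫ t in (0:ℝ)..1, P (x + t • c) := funext hPbar'
    rw [this]; exact h0
  have hVeq : ∀ x ∈ strip n s, V x =
      T • ((∫ t in (0:ℝ)..1, t • P (x + t • c)) - (2⁻¹ : ℝ) • Pbar x) := by
    intro x hx
    rw [hV]
    congr 1
    have e1 : ∀ t : ℝ,
        t • (P (x + fun i => ((t * T * ω i : ℝ) : ℂ)) -
          Pbar (x + fun i => ((t * T * ω i : ℝ) : ℂ))) =
        t • P (x + t • c) - t • Pbar x := by
      intro t
      rw [key, hPinv, smul_sub]
    simp_rw [e1]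
    have ia : IntervalIntegrable (fun t : ℝ => t • P (x + t • c)) volume 0 1 :=
      (continuous_id.smul (line_cont x hx)).intervalIntegrable 0 1
    have ib : IntervalIntegrable (fun t : ℝ => t • Pbar x) volume 0 1 :=
      (continuous_id.smul continuous_const).intervalIntegrable 0 1
    rw [intervalIntegral.integral_sub ia ib,
      intervalIntegral.integral_smul_const, integral_id]
    norm_num
  have hVF : HasFDerivAt V
      (T • ((∫ t in (0:ℝ)..1, t • fderiv ℂ P (z + t • c)) -
        (2⁻¹ : ℝ) • ∫ t in (0:ℝ)..1, fderiv ℂ P (z + t • c))) z := by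
    have hG : HasFDerivAt
        (fun x => T • ((∫ t in (0:ℝ)..1, t • P (x + t • c)) - (2⁻¹ : ℝ) • Pbar x))
        (T • ((∫ t in (0:ℝ)..1, t • fderiv ℂ P (z + t • c)) -
          (2⁻¹ : ℝ) • ∫ t in (0:ℝ)..1, fderiv ℂ P (z + t • c))) z :=
      ((h1.sub (hPbarF.const_smul (2⁻¹ : ℝ))).const_smul T)
    apply hG.congr_of_eventuallyEq
    filter_upwards [(strip_open n s).mem_nhds hz] with x hx
    exact hVeq x hx
  rw [hVF.fderiv]
  -- helper: applying a CLM-valued interval integral to a vector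
  have apply_int : ∀ (φ : ℝ → ((Fin n → ℂ) →L[ℂ] (Fin n → ℂ))),
      StronglyMeasurable φ → (∀ t ∈ Set.Ioc (0:ℝ) 1, ‖φ t‖ ≤ K) →
      (∫ t in (0:ℝ)..1, φ t) ωc = ∫ t in (0:ℝ)..1, φ t ωc := by
    intro φ hφm hφb
    have hconst : IntegrableOn (fun _ : ℝ => K) (Set.Ioc (0:ℝ) 1) volume :=
      (intervalIntegrable_iff_integrableOn_Ioc_of_le zero_le_one).1 intervalIntegrable_const
    have hint : IntegrableOn φ (Set.Ioc (0:ℝ) 1) volume := by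
      apply hconst.mono' hφm.aestronglyMeasurable.restrict
      exact (ae_restrict_iff' measurableSet_Ioc).2 (Filter.Eventually.of_forall hφb)
    rw [intervalIntegral.integral_of_le zero_le_one,
      intervalIntegral.integral_of_le zero_le_one]
    exact ContinuousLinearMap.integral_apply hint ωc
  set D : ℝ → (Fin n → ℂ) := fun t => fderiv ℂ P (z + t • c) ωc with hD
  have hzb : z ∈ Metric.ball z δ := Metric.mem_ball_self hδ
  have hDb : ∀ t : ℝ, ‖D t‖ ≤ K * ‖ωc‖ := by
    intro t
    exact le_trans ((fderiv ℂ P (z + t • c)).le_opNorm ωc)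
      (mul_le_mul_of_nonneg_right (hKb z hzb t) (norm_nonneg _))
  have hDm : StronglyMeasurable D :=
    ((measurable_fderiv_apply_const ℂ P ωc).comp (line_meas z)).stronglyMeasurable
  have intIoc : ∀ (f : ℝ → (Fin n → ℂ)), StronglyMeasurable f →
      (∀ t ∈ Set.Ioc (0:ℝ) 1, ‖f t‖ ≤ K * ‖ωc‖) → IntervalIntegrable f volume 0 1 := by
    intro f hfm hfb
    rw [intervalIntegrable_iff_integrableOn_Ioc_of_le zero_le_one]
    have hconst : IntegrableOn (fun _ : ℝ => K * ‖ωc‖) (Set.Ioc (0:ℝ) 1) volume :=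
      (intervalIntegrable_iff_integrableOn_Ioc_of_le zero_le_one).1 intervalIntegrable_const
    apply hconst.mono' hfm.aestronglyMeasurable.restrict
    exact (ae_restrict_iff' measurableSet_Ioc).2 (Filter.Eventually.of_forall hfb)
  have intD : IntervalIntegrable D volume 0 1 :=
    intIoc D hDm fun t _ => hDb t
  have int_tD : IntervalIntegrable (fun t => t • D t) volume 0 1 := by
    apply intIoc _ (stronglyMeasurable_id.smul hDm)
    intro t ht
    show ‖t • D t‖ ≤ K * ‖ωc‖
    rw [norm_smul, Real.norm_eq_abs]
    calc |t| * ‖D t‖ ≤ 1 * (K * ‖ωc‖) :=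
          mul_le_mul (by rw [abs_of_pos ht.1]; exact ht.2) (hDb t) (norm_nonneg _) zero_le_one
      _ = K * ‖ωc‖ := one_mul _
  set g : ℝ → (Fin n → ℂ) := fun t => P (z + t • c) with hg
  have hgd : ∀ t : ℝ, HasDerivAt g (T • D t) t := by
    intro t
    have hline : HasDerivAt (fun t : ℝ => z + t • c) c t := by
      simpa using ((hasDerivAt_id t).smul_const c).const_add z
    have hPz : DifferentiableAt ℂ P (z + t • c) := hdiffray z hzb t
    have hcomp' := (hPz.hasFDerivAt.restrictScalars ℝ).comp_hasDerivAt t hline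
    have hval : (fderiv ℂ P (z + t • c)).restrictScalars ℝ c = T • D t := by
      have h2 : (fderiv ℂ P (z + t • c)).restrictScalars ℝ (T • ωc) = T • D t :=
        _root_.map_smul ((fderiv ℂ P (z + t • c)).restrictScalars ℝ) T ωc
      rw [← hcT] at h2
      exact h2
    rw [hval] at hcomp'
    exact hcomp'
  have g1 : g 1 = P z := by
    have hp := per z 0
    simpa [hg] using hp
  have g0 : g 0 = P z := by simp [hg]
  -- B = ∫ D = 0
  have hB : (∫ t in (0:ℝ)..1, D t) = 0 := by
    have hftc : (∫ t in (0:ℝ)..1, T • D t) = g 1 - g 0 :=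
      intervalIntegral.integral_eq_sub_of_hasDerivAt (fun t _ => hgd t) (intD.smul T)
    rw [intervalIntegral.integral_smul, g1, g0, sub_self] at hftc
    rcases smul_eq_zero.1 hftc with h | h
    · exact absurd h (ne_of_gt hT)
    · exact h
  -- A : T • ∫ t • D t = P z - Pbar z
  have hA : T • (∫ t in (0:ℝ)..1, t • D t) = P z - Pbar z := by
    have hhd : ∀ t : ℝ, HasDerivAt (fun u => u • g u) (t • (T • D t) + g t) t := by
      intro t
      convert (hasDerivAt_id' t).smul (hgd t) using 1 <;> first | rfl | simp
    have e2 : (fun t : ℝ => t • (T • D t)) = fun t : ℝ => T • (t • D t) :=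
      funext fun t => smul_comm _ _ _
    have int1 : IntervalIntegrable (fun t : ℝ => t • (T • D t)) volume 0 1 := by
      rw [e2]; exact int_tD.smul T
    have intg : IntervalIntegrable g volume 0 1 :=
      (line_cont z hz).intervalIntegrable 0 1
    have hftc : (∫ t in (0:ℝ)..1, (t • (T • D t) + g t)) =
        (1:ℝ) • g 1 - (0:ℝ) • g 0 :=
      intervalIntegral.integral_eq_sub_of_hasDerivAt (fun t _ => hhd t) (int1.add intg)
    rw [intervalIntegral.integral_add int1 intg, one_smul, zero_smul, sub_zero, g1] at hftc
    have hPbarz : (∫ t in (0:ℝ)..1, g t) = Pbar z := (hPbar' z).symm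
    rw [hPbarz] at hftc
    have : (∫ t in (0:ℝ)..1, t • (T • D t)) = T • ∫ t in (0:ℝ)..1, t • D t := by
      rw [e2, intervalIntegral.integral_smul]
    rw [this] at hftc
    rw [eq_sub_iff_add_eq]
    exact hftc
  have hL1 : (∫ t in (0:ℝ)..1, t • fderiv ℂ P (z + t • c)) ωc
      = ∫ t in (0:ℝ)..1, t • D t := by
    rw [apply_int _ (smF' z) ?_]
    · simp_rw [ContinuousLinearMap.smul_apply]; rfl
    · intro t ht
      calc ‖t • fderiv ℂ P (z + t • c)‖ = |t| * ‖fderiv ℂ P (z + t • c)‖ := by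
            rw [norm_smul, Real.norm_eq_abs]
        _ ≤ 1 * K := mul_le_mul (by rw [abs_of_pos ht.1]; exact ht.2)
            (hKb z hzb t) (norm_nonneg _) zero_le_one
        _ = K := one_mul K
  have hL0 : (∫ t in (0:ℝ)..1, fderiv ℂ P (z + t • c)) ωc = ∫ t in (0:ℝ)..1, D t :=
    apply_int _ (smF z) (fun t _ => hKb z hzb t)
  simp only [ContinuousLinearMap.smul_apply, ContinuousLinearMap.sub_apply]
  rw [hL1, hL0, hB, smul_zero, sub_zero, hA]
end
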